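/- For integers t, k, v, m with k ≥ t ≥ 2, v ≥ 2 and 2 ≤ m ≤ v^t, and a real number ε with 0 < ε ≤ 1, any natural number N satisfying N ≥ ln(C(v^t, m−1)/ε) / ln(v^t/(m−1)) admits an ε-almost partial m-covering array APCA(N; t, k, v, m, ε); i.e., there exists an array A : Fin N → Fin k → Fin v such that for at least (1−ε)·C(k,t) of the t-subsets C of columns, the rows of A restricted to C take at least m distinct values in (Fin v)^C. Note the bound on N is independent of k. -/

import Mathlib

open Finset

lemma coverCount_eq' {N k v : ℕ} (A : Fin N → Fin k → Fin v) (C : Finset (Fin k)) :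
    Nat.card {x : C → Fin v // ∃ i : Fin N, (fun j : C => A i j) = x}
      = (Finset.univ.image (fun i : Fin N => fun j : C => A i j)).card := by
  classical
  have h : {x : C → Fin v // ∃ i : Fin N, (fun j : C => A i j) = x}
      = ↥(Set.range fun i : Fin N => fun j : C => A i j) := rfl
  rw [h, Nat.card_eq_card_finite_toFinset (Set.finite_range _)]
  congr 1
  ext x
  simp

lemma piece_card {N k v : ℕ} (C : Finset (Fin k)) (T : Finset (↥C → Fin v)) :
    (Finset.univ.filter fun A : Fin N → Fin k → Fin v =>
        ∀ i, (fun j : C => A i j) ∈ T).card ≤ (T.card * v ^ Cᶜ.card) ^ N := by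
  classical
  have := Finset.card_le_card_of_injOn
    (f := fun A : Fin N → Fin k → Fin v =>
      ((fun i (j : C) => A i j, fun i (j : ↥(Cᶜ)) => A i j) :
        (Fin N → ↥C → Fin v) × (Fin N → ↥(Cᶜ) → Fin v)))
    (s := Finset.univ.filter fun A : Fin N → Fin k → Fin v => ∀ i, (fun j : C => A i j) ∈ T)
    (t := (Fintype.piFinset fun _ : Fin N => T) ×ˢ Finset.univ)
    (by
      intro A hA
      simp only [mem_coe, mem_filter, mem_univ, true_and] at hA
      simp only [mem_coe, mem_product, Fintype.mem_piFinset, mem_univ, and_true]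
      exact hA)
    (by
      intro A _ A' _ h
      simp only [Prod.mk.injEq] at h
      funext i j
      by_cases hj : j ∈ C
      · exact congrFun (congrFun h.1 i) ⟨j, hj⟩
      · exact congrFun (congrFun h.2 i) ⟨j, Finset.mem_compl.2 hj⟩)
  refine this.trans (le_of_eq ?_)
  rw [Finset.card_product, Fintype.card_piFinset]
  simp [Fintype.card_fun, Finset.card_univ, mul_pow, Finset.card_compl, Fintype.card_fin]

lemma badcol_card {N k v t m : ℕ} (hm1 : 1 ≤ m) (hm2 : m ≤ v ^ t)
    (C : Finset (Fin k)) (hC : C.card = t) :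
    (Finset.univ.filter fun A : Fin N → Fin k → Fin v =>
        (Finset.univ.image (fun i : Fin N => fun j : C => A i j)).card < m).card
      ≤ (v ^ t).choose (m - 1) * ((m - 1) * v ^ (k - t)) ^ N := by
  classical
  have hsub : (Finset.univ.filter fun A : Fin N → Fin k → Fin v =>
        (Finset.univ.image (fun i : Fin N => fun j : C => A i j)).card < m)
      ⊆ (Finset.powersetCard (m - 1) (Finset.univ : Finset (↥C → Fin v))).biUnion
        (fun T => Finset.univ.filter fun A : Fin N → Fin k → Fin v =>
          ∀ i, (fun j : C => A i j) ∈ T) := by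
    intro A hA
    simp only [mem_filter, mem_univ, true_and] at hA
    have himg : (Finset.univ.image (fun i : Fin N => fun j : C => A i j)).card ≤ m - 1 := by
      omega
    have hcard : m - 1 ≤ (Finset.univ : Finset (↥C → Fin v)).card := by
      rw [Finset.card_univ, Fintype.card_fun, Fintype.card_fin, Fintype.card_coe, hC]
      omega
    obtain ⟨T, hsubT, -, hTcard⟩ :=
      Finset.exists_subsuperset_card_eq (Finset.subset_univ _) himg hcard
    refine Finset.mem_biUnion.2 ⟨T, ?_, ?_⟩
    · exact Finset.mem_powersetCard.2 ⟨Finset.subset_univ _, hTcard⟩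
    · simp only [mem_filter, mem_univ, true_and]
      intro i
      exact hsubT (Finset.mem_image_of_mem _ (Finset.mem_univ i))
  calc _ ≤ _ := Finset.card_le_card hsub
    _ ≤ ∑ T ∈ Finset.powersetCard (m - 1) (Finset.univ : Finset (↥C → Fin v)),
          (Finset.univ.filter fun A : Fin N → Fin k → Fin v =>
            ∀ i, (fun j : C => A i j) ∈ T).card := Finset.card_biUnion_le
    _ ≤ ∑ _T ∈ Finset.powersetCard (m - 1) (Finset.univ : Finset (↥C → Fin v)),
          ((m - 1) * v ^ (k - t)) ^ N := by
        refine Finset.sum_le_sum fun T hT => ?_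
        obtain ⟨-, hTcard⟩ := Finset.mem_powersetCard.1 hT
        have := piece_card (N := N) C T
        rw [hTcard, Finset.card_compl, Fintype.card_fin, hC] at this
        exact this
    _ = (v ^ t).choose (m - 1) * ((m - 1) * v ^ (k - t)) ^ N := by
        rw [Finset.sum_const, Finset.card_powersetCard, Finset.card_univ,
          Fintype.card_fun, Fintype.card_fin, Fintype.card_coe, hC, smul_eq_mul]

lemma keyineq (t v m N : ℕ) (ε : ℝ) (hv : 2 ≤ v) (hm1 : 2 ≤ m) (hm2 : m ≤ v ^ t)
    (hε0 : 0 < ε)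
    (hN : Real.log (((v ^ t).choose (m - 1) : ℝ) / ε) /
        Real.log ((v : ℝ) ^ t / ((m : ℝ) - 1)) ≤ (N : ℝ)) :
    (((v ^ t).choose (m - 1) : ℝ)) * ((m : ℝ) - 1) ^ N ≤ ε * ((v : ℝ) ^ t) ^ N := by
  set ch := (((v ^ t).choose (m - 1) : ℝ)) with hch
  have hch1 : (1 : ℝ) ≤ ch := by
    rw [hch]
    exact_mod_cast Nat.one_le_iff_ne_zero.2 (Nat.choose_pos (by omega)).ne'
  have hM : (1 : ℝ) ≤ (m : ℝ) - 1 := by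
    have : (2 : ℝ) ≤ (m : ℝ) := by exact_mod_cast hm1
    linarith
  have hV : ((m : ℝ) - 1) < (v : ℝ) ^ t := by
    have : (m : ℝ) ≤ ((v : ℝ)) ^ t := by exact_mod_cast hm2
    linarith
  have hRgt1 : 1 < (v : ℝ) ^ t / ((m : ℝ) - 1) := (one_lt_div (by linarith)).2 hV
  have hD : 0 < Real.log ((v : ℝ) ^ t / ((m : ℝ) - 1)) := Real.log_pos hRgt1
  have h1 : Real.log (ch / ε) ≤ (N : ℝ) * Real.log ((v : ℝ) ^ t / ((m : ℝ) - 1)) := by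
    rw [div_le_iff₀ hD] at hN
    linarith [hN]
  have h2 : ch / ε ≤ ((v : ℝ) ^ t / ((m : ℝ) - 1)) ^ N := by
    have h0 : 0 < ch / ε := div_pos (by linarith) hε0
    refine (Real.log_le_log_iff h0 (pow_pos (by linarith) N)).1 ?_
    rw [Real.log_pow]
    exact h1
  rw [div_pow, div_le_div_iff₀ hε0 (pow_pos (by linarith) N)] at h2
  calc ch * ((m : ℝ) - 1) ^ N ≤ ((v : ℝ) ^ t) ^ N * ε := h2
    _ = ε * ((v : ℝ) ^ t) ^ N := mul_comm _ _


/-- The number of distinct `t`-tuples `x : C → Fin v` covered by the rows of the array `A`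
restricted to the column set `C`. -/
noncomputable def coverCount {N k v : ℕ} (A : Fin N → Fin k → Fin v) (C : Finset (Fin k)) : ℕ :=
  Nat.card {x : C → Fin v // ∃ i : Fin N, (fun j : C => A i j) = x}

lemma coverCount_eq {N k v : ℕ} (A : Fin N → Fin k → Fin v) (C : Finset (Fin k)) :
    coverCount A C = (Finset.univ.image (fun i : Fin N => fun j : C => A i j)).card :=
  coverCount_eq' A C

theorem stmt_2 (t k v m N : ℕ) (ε : ℝ) (ht : 2 ≤ t) (htk : t ≤ k) (hv : 2 ≤ v)
    (hm1 : 2 ≤ m) (hm2 : m ≤ v ^ t) (hε0 : 0 < ε) (hε1 : ε ≤ 1)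
    (hN : Real.log (((v ^ t).choose (m - 1) : ℝ) / ε) /
        Real.log ((v : ℝ) ^ t / ((m : ℝ) - 1)) ≤ (N : ℝ)) :
    ∃ A : Fin N → Fin k → Fin v,
      (1 - ε) * (k.choose t : ℝ) ≤
        (Nat.card {C : Finset (Fin k) // C.card = t ∧ m ≤ coverCount A C} : ℝ) := by
  classical
  haveI : NeZero v := ⟨by omega⟩
  set B : ℕ := (v ^ t).choose (m - 1) * ((m - 1) * v ^ (k - t)) ^ N with hB
  set pcard : Finset (Finset (Fin k)) := Finset.powersetCard t Finset.univ with hpcard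
  have hpcard_card : pcard.card = k.choose t := by
    rw [hpcard, Finset.card_powersetCard, Finset.card_univ, Fintype.card_fin]
  set badC : (Fin N → Fin k → Fin v) → Finset (Finset (Fin k)) :=
    fun A => pcard.filter (fun C => coverCount A C < m) with hbadC
  -- double counting
  have hswap : ∑ C ∈ pcard,
      (Finset.univ.filter fun A : Fin N → Fin k → Fin v => coverCount A C < m).card
      = ∑ A : Fin N → Fin k → Fin v, (badC A).card := by
    simp_rw [hbadC, Finset.card_filter]
    exact Finset.sum_comm
  -- per-column bound
  have hcol : ∀ C ∈ pcard,
      (Finset.univ.filter fun A : Fin N → Fin k → Fin v => coverCount A C < m).card ≤ B := by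
    intro C hC
    have hCc : C.card = t := (Finset.mem_powersetCard.1 hC).2
    simp_rw [coverCount_eq]
    exact badcol_card (by omega) hm2 C hCc
  have htotal : ∑ A : Fin N → Fin k → Fin v, (badC A).card ≤ k.choose t * B := by
    rw [← hswap]
    calc ∑ C ∈ pcard, _ ≤ pcard.card * B := by
          simpa using Finset.sum_le_card_nsmul pcard _ B hcol
      _ = k.choose t * B := by rw [hpcard_card]
  -- real bound on B
  have hMcast : ((m - 1 : ℕ) : ℝ) = (m : ℝ) - 1 := by
    rw [Nat.cast_sub (by omega), Nat.cast_one]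
  have hBreal : (B : ℝ) ≤ ε * ((v : ℝ) ^ k) ^ N := by
    have key := keyineq t v m N ε hv hm1 hm2 hε0 hN
    have hpos : (0 : ℝ) ≤ ((v : ℝ) ^ (k - t)) ^ N := by positivity
    calc (B : ℝ) = ((v ^ t).choose (m - 1) : ℝ) * ((m : ℝ) - 1) ^ N
            * ((v : ℝ) ^ (k - t)) ^ N := by
          rw [hB, Nat.cast_mul, Nat.cast_pow, Nat.cast_mul, Nat.cast_pow, hMcast, mul_pow]
          ring
      _ ≤ ε * ((v : ℝ) ^ t) ^ N * ((v : ℝ) ^ (k - t)) ^ N := by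
          exact mul_le_mul_of_nonneg_right key hpos
      _ = ε * ((v : ℝ) ^ t * (v : ℝ) ^ (k - t)) ^ N := by rw [mul_pow]; ring
      _ = ε * ((v : ℝ) ^ k) ^ N := by rw [← pow_add, Nat.add_sub_cancel' htk]
  -- averaging
  have hΩ : (Fintype.card (Fin N → Fin k → Fin v) : ℝ) = ((v : ℝ) ^ k) ^ N := by
    simp [Fintype.card_fun, Fintype.card_fin]
  have havg : ∑ A : Fin N → Fin k → Fin v, ((badC A).card : ℝ)
      ≤ ∑ _A : Fin N → Fin k → Fin v, ε * (k.choose t : ℝ) := by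
    rw [Finset.sum_const, Finset.card_univ, nsmul_eq_mul, hΩ]
    calc ∑ A : Fin N → Fin k → Fin v, ((badC A).card : ℝ)
        = ((∑ A : Fin N → Fin k → Fin v, (badC A).card : ℕ) : ℝ) := by push_cast; ring
      _ ≤ ((k.choose t * B : ℕ) : ℝ) := by exact_mod_cast htotal
      _ = (k.choose t : ℝ) * (B : ℝ) := by push_cast; ring
      _ ≤ (k.choose t : ℝ) * (ε * ((v : ℝ) ^ k) ^ N) := by
          exact mul_le_mul_of_nonneg_left hBreal (by positivity)
      _ = ((v : ℝ) ^ k) ^ N * (ε * (k.choose t : ℝ)) := by ring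
  obtain ⟨A, -, hA⟩ := Finset.exists_le_of_sum_le Finset.univ_nonempty havg
  refine ⟨A, ?_⟩
  -- partition of t-subsets
  have hpart : (pcard.filter fun C => m ≤ coverCount A C).card + (badC A).card
      = k.choose t := by
    rw [hbadC]
    have := Finset.card_filter_add_card_filter_not
      (s := pcard) (p := fun C => m ≤ coverCount A C)
    rw [← hpcard_card, ← this]
    congr 1
    simp [not_le]
  have hgood : (Nat.card {C : Finset (Fin k) // C.card = t ∧ m ≤ coverCount A C} : ℕ)
      = (pcard.filter fun C => m ≤ coverCount A C).card := by
    rw [Nat.card_eq_fintype_card, Fintype.card_subtype]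
    congr 1
    ext C
    simp [hpcard, Finset.mem_powersetCard_univ, and_comm]
  rw [hgood]
  have hbadle : ((badC A).card : ℝ) ≤ ε * (k.choose t : ℝ) := hA
  have hparte : ((pcard.filter fun C => m ≤ coverCount A C).card : ℝ) + ((badC A).card : ℝ)
      = (k.choose t : ℝ) := by exact_mod_cast hpart
  linarith
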